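/- arXiv:2101.08529 — 4 statements merged into one kernel-verified Lean document; each statement's English description precedes it below -/
import Mathlib

section
/- Fix k ≥ 1, σ > 0, a spectral density h_σ = σ²·h₁ with h₁ > 0 a.e., and parameters μ_j ∈ (-π/j, π/j], κ_j ≥ 0 (j = 1,...,k). Define the exponentially tilted density g_σ(θ) = h_σ(θ) · exp{ Σ_{j=1}^k κ_j cos(j(θ - μ_j)) } / G₀, where G₀ = ∫_{-π}^{π} exp{ Σ_{j=1}^k κ_j cos(j(θ - μ_j)) } h₁(θ) dθ. Then for any spectral density q_σ with total mass σ² satisfying ∫_{-π}^{π} e^{irθ} q_σ(θ) dθ = ∫_{-π}^{π} e^{irθ} g_σ(θ) dθ for r = 1,...,k, it holds that I(q_σ|h_σ) ≥ I(g_σ|h_σ), with equality iff q_σ = g_σ almost everywhere. -/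
open MeasureTheory Real Set

lemma gibbs_aux {ν : Measure ℝ} (q g : ℝ → ℝ)
    (hq0 : ∀ x, 0 ≤ q x) (hgpos : ∀ᵐ x ∂ν, 0 < g x)
    (hqint : Integrable q ν) (hgint : Integrable g ν)
    (hmass : ∫ x, q x ∂ν = ∫ x, g x ∂ν)
    (hD : Integrable (fun x => Real.log (q x / g x) * q x) ν) :
    0 ≤ ∫ x, Real.log (q x / g x) * q x ∂ν ∧
      ((∫ x, Real.log (q x / g x) * q x ∂ν) = 0 ↔ q =ᵐ[ν] g) := by
  set F : ℝ → ℝ := fun x => Real.log (q x / g x) * q x - (q x - g x) with hF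
  have hqg : Integrable (fun x => q x - g x) ν := hqint.sub hgint
  have hFint : Integrable F ν := hD.sub hqg
  have hF0 : ∀ᵐ x ∂ν, 0 ≤ F x := by
    filter_upwards [hgpos] with x hg
    rcases eq_or_lt_of_le (hq0 x) with h0 | hqpos
    · simp [hF, ← h0, le_of_lt hg]
    · have ht : 0 < q x / g x := div_pos hqpos hg
      have hlog : 1 - (q x / g x)⁻¹ ≤ Real.log (q x / g x) := by
        have := Real.log_le_sub_one_of_pos (inv_pos.mpr ht)
        rw [Real.log_inv] at this; linarith
      have : q x - g x ≤ Real.log (q x / g x) * q x := by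
        have h2 : (1 - (q x / g x)⁻¹) * q x ≤ Real.log (q x / g x) * q x :=
          mul_le_mul_of_nonneg_right hlog (hq0 x)
        have h3 : (1 - (q x / g x)⁻¹) * q x = q x - g x := by
          field_simp
        linarith [h2, h3.symm ▸ h2]
      simp only [hF]; linarith
  have hFI : ∫ x, F x ∂ν = ∫ x, Real.log (q x / g x) * q x ∂ν := by
    have : ∫ x, F x ∂ν = ∫ x, Real.log (q x / g x) * q x ∂ν - ∫ x, (q x - g x) ∂ν :=
      integral_sub hD hqg
    rw [this, integral_sub hqint hgint, hmass]
    ring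
  constructor
  · rw [← hFI]; exact integral_nonneg_of_ae hF0
  constructor
  · intro hzero
    have hFzero : F =ᵐ[ν] 0 := by
      rw [← integral_eq_zero_iff_of_nonneg_ae hF0 hFint, hFI]
      exact hzero
    filter_upwards [hgpos, hFzero] with x hg hFx
    simp only [Pi.zero_apply, hF] at hFx
    rcases eq_or_lt_of_le (hq0 x) with h0 | hqpos
    · exfalso; rw [← h0] at hFx; simp at hFx; linarith
    · by_contra hne
      have ht : 0 < q x / g x := div_pos hqpos hg
      have htne : (q x / g x)⁻¹ ≠ 1 := by
        intro h1
        rw [inv_eq_one] at h1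
        field_simp at h1
        exact hne h1
      have hlog : 1 - (q x / g x)⁻¹ < Real.log (q x / g x) := by
        have := Real.log_lt_sub_one_of_pos (inv_pos.mpr ht) htne
        rw [Real.log_inv] at this; linarith
      have h2 : (1 - (q x / g x)⁻¹) * q x < Real.log (q x / g x) * q x :=
        mul_lt_mul_of_pos_right hlog hqpos
      have h3 : (1 - (q x / g x)⁻¹) * q x = q x - g x := by field_simp
      rw [h3] at h2
      linarith
  · intro heq
    have : (fun x => Real.log (q x / g x) * q x) =ᵐ[ν] 0 := by
      filter_upwards [hgpos, heq] with x hg hx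
      simp [hx, div_self (ne_of_gt hg)]
    rw [integral_congr_ae this]
    simp

/-- The exponential tilt of a spectral density `h_σ = σ² h₁` matching the first `k`
autocovariance constraints minimizes the Kullback-Leibler information w.r.t. `h_σ`
among all spectral densities of total mass `σ²` satisfying the same constraints,
with uniqueness up to a.e. equality. -/
theorem kl_closest_spectral_density (k : ℕ) (hk : 1 ≤ k) (σ : ℝ) (hσ : 0 < σ)
    (h₁ : ℝ → ℝ) (μpar κ : ℕ → ℝ)
    (hh : Measurable h₁) (hh0 : ∀ θ, 0 ≤ h₁ θ)
    (hhpos : ∀ᵐ θ ∂(volume.restrict (Ioc (-π) π)), 0 < h₁ θ)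
    (hh1 : ∫ θ in Ioc (-π) π, h₁ θ = 1)
    (hμ : ∀ j ∈ Finset.Icc 1 k, μpar j ∈ Ioc (-(π / j)) (π / j))
    (hκ : ∀ j ∈ Finset.Icc 1 k, 0 ≤ κ j)
    (G₀ : ℝ)
    (hG₀ : G₀ = ∫ θ in Ioc (-π) π,
      Real.exp (∑ j ∈ Finset.Icc 1 k, κ j * Real.cos (j * (θ - μpar j))) * h₁ θ)
    (g : ℝ → ℝ)
    (hgdef : ∀ θ, g θ =
      σ ^ 2 * h₁ θ * Real.exp (∑ j ∈ Finset.Icc 1 k, κ j * Real.cos (j * (θ - μpar j))) / G₀)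
    (q : ℝ → ℝ) (hq : Measurable q) (hq0 : ∀ θ, 0 ≤ q θ)
    (hqmass : ∫ θ in Ioc (-π) π, q θ = σ ^ 2)
    (hqsupp : ∀ θ ∈ Ioc (-π) π, h₁ θ = 0 → q θ = 0)
    (hconstraints : ∀ r ∈ Finset.Icc 1 k,
      (∫ θ in Ioc (-π) π, Complex.exp (Complex.I * r * θ) * (q θ : ℝ)) =
        ∫ θ in Ioc (-π) π, Complex.exp (Complex.I * r * θ) * (g θ : ℝ))
    (hIq : IntegrableOn (fun θ => Real.log (q θ / (σ ^ 2 * h₁ θ)) * q θ) (Ioc (-π) π))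
    (hIg : IntegrableOn (fun θ => Real.log (g θ / (σ ^ 2 * h₁ θ)) * g θ) (Ioc (-π) π)) :
    (∫ θ in Ioc (-π) π, Real.log (g θ / (σ ^ 2 * h₁ θ)) * g θ) ≤
      (∫ θ in Ioc (-π) π, Real.log (q θ / (σ ^ 2 * h₁ θ)) * q θ) ∧
    ((∫ θ in Ioc (-π) π, Real.log (q θ / (σ ^ 2 * h₁ θ)) * q θ) =
        (∫ θ in Ioc (-π) π, Real.log (g θ / (σ ^ 2 * h₁ θ)) * g θ) ↔
      q =ᵐ[volume.restrict (Ioc (-π) π)] g) := by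
  set ν := volume.restrict (Ioc (-π) π) with hν
  set S : ℝ → ℝ := fun θ => ∑ j ∈ Finset.Icc 1 k, κ j * Real.cos (j * (θ - μpar j)) with hS
  set C : ℝ := ∑ j ∈ Finset.Icc 1 k, κ j with hC
  -- basic facts
  have hIq' : Integrable (fun θ => Real.log (q θ / (σ ^ 2 * h₁ θ)) * q θ) ν := hIq
  have hSmeas : Measurable S := by
    apply Finset.measurable_sum
    intro j _
    exact (measurable_const.mul ((measurable_const.mul (measurable_id.sub measurable_const)).cos))
  have hSbd : ∀ θ, |S θ| ≤ C := by
    intro θ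
    calc |S θ| ≤ ∑ j ∈ Finset.Icc 1 k, |κ j * Real.cos (j * (θ - μpar j))| :=
          Finset.abs_sum_le_sum_abs _ _
      _ ≤ C := by
          apply Finset.sum_le_sum
          intro j hj
          rw [abs_mul, abs_of_nonneg (hκ j hj)]
          exact mul_le_of_le_one_right (hκ j hj) (Real.abs_cos_le_one _)
  have hνne : ν ≠ 0 := by
    intro h
    have h2 : volume (Ioc (-π) π) = 0 := by
      rw [← Measure.restrict_apply_univ, ← hν, h]; rfl
    rw [Real.volume_Ioc] at h2
    rw [ENNReal.ofReal_eq_zero] at h2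
    linarith [pi_pos]
  have hh₁int : Integrable h₁ ν := by
    by_contra hcon
    rw [integral_undef hcon] at hh1; norm_num at hh1
  have hqint : Integrable q ν := by
    by_contra hcon
    rw [integral_undef hcon] at hqmass
    nlinarith [hqmass, hσ]
  have hEint : Integrable (fun θ => Real.exp (S θ) * h₁ θ) ν := by
    apply Integrable.mono' (hh₁int.const_mul (Real.exp C))
    · exact ((Real.measurable_exp.comp hSmeas).mul hh).aestronglyMeasurable
    · filter_upwards with θ
      rw [Real.norm_eq_abs, abs_mul, abs_of_pos (Real.exp_pos _), abs_of_nonneg (hh0 θ)]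
      exact mul_le_mul_of_nonneg_right
        (Real.exp_le_exp.mpr ((abs_le.mp (hSbd θ)).2)) (hh0 θ)
  have hG₀pos : 0 < G₀ := by
    rcases lt_or_eq_of_le (integral_nonneg (fun θ => mul_nonneg (Real.exp_pos (S θ)).le (hh0 θ)) :
        (0:ℝ) ≤ ∫ θ, Real.exp (S θ) * h₁ θ ∂ν) with hlt | heq0
    · rw [hG₀]; exact hlt
    · exfalso
      have hzero : (fun θ => Real.exp (S θ) * h₁ θ) =ᵐ[ν] 0 := by
        rw [← integral_eq_zero_iff_of_nonneg_ae
          (Filter.Eventually.of_forall fun θ => mul_nonneg (Real.exp_pos (S θ)).le (hh0 θ)) hEint]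
        exact heq0.symm
      have hfalse : ∀ᵐ θ ∂ν, False := by
        filter_upwards [hhpos, hzero] with θ h1 h2
        simp only [Pi.zero_apply] at h2
        have := mul_pos (Real.exp_pos (S θ)) h1
        linarith
      exact hνne (ae_eq_bot.mp (Filter.eventually_false_iff_eq_bot.mp hfalse))
  have hgeq : g = fun θ => (σ ^ 2 / G₀) * (Real.exp (S θ) * h₁ θ) := by
    funext θ; rw [hgdef θ]; ring
  have hgmeas : Measurable g := by
    rw [hgeq]; exact measurable_const.mul ((Real.measurable_exp.comp hSmeas).mul hh)
  have hgint : Integrable g ν := by rw [hgeq]; exact hEint.const_mul _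
  have hg0 : ∀ θ, 0 ≤ g θ := by
    intro θ; rw [hgdef θ]
    exact div_nonneg (mul_nonneg (mul_nonneg (by positivity) (hh0 θ)) (Real.exp_pos _).le) hG₀pos.le
  have hgmass : ∫ θ, g θ ∂ν = σ ^ 2 := by
    have h1 : ∫ θ, g θ ∂ν = ∫ θ, (σ ^ 2 / G₀) * (Real.exp (S θ) * h₁ θ) ∂ν := by
      apply integral_congr_ae
      filter_upwards with θ
      rw [hgdef θ]; ring
    rw [h1, integral_const_mul, ← hG₀]
    field_simp
  have hgpos : ∀ᵐ θ ∂ν, 0 < g θ := by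
    filter_upwards [hhpos] with θ h
    rw [hgdef θ]
    exact div_pos (mul_pos (mul_pos (pow_pos hσ 2) h) (Real.exp_pos _)) hG₀pos
  -- complex integrands
  have hcint : ∀ (p : ℝ → ℝ), Integrable p ν → (∀ θ, 0 ≤ p θ) → Measurable p → ∀ j : ℕ,
      Integrable (fun θ : ℝ => Complex.exp (Complex.I * (j : ℂ) * (θ : ℂ)) * ((p θ : ℝ) : ℂ)) ν := by
    intro p hp hp0 hpm j
    apply Integrable.mono' hp
    · exact ((Complex.measurable_exp.comp
        ((Complex.measurable_ofReal.const_mul (Complex.I * j)))).mul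
        (Complex.measurable_ofReal.comp hpm)).aestronglyMeasurable
    · filter_upwards with θ
      rw [norm_mul, Complex.norm_exp,
        Complex.norm_real, Real.norm_eq_abs, abs_of_nonneg (hp0 θ)]
      have : (Complex.I * (j:ℂ) * (θ:ℂ)).re = 0 := by simp
      rw [this, Real.exp_zero, one_mul]
  -- step A: matching the trigonometric moments
  have hkey : ∀ j : ℕ, ∀ (p : ℝ → ℝ), (∀ θ, 0 ≤ p θ) →
      Integrable (fun θ : ℝ => Complex.exp (Complex.I * (j : ℂ) * (θ : ℂ)) * ((p θ : ℝ) : ℂ)) ν →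
      ∫ θ, Real.cos (j * (θ - μpar j)) * p θ ∂ν =
        (Complex.exp (-(Complex.I * j * μpar j)) *
          ∫ θ, Complex.exp (Complex.I * j * θ) * (p θ : ℂ) ∂ν).re := by
    intro j p hp0 hint
    rw [← integral_const_mul, ← RCLike.re_to_complex, ← integral_re (hint.const_mul _)]
    apply integral_congr_ae
    filter_upwards with θ
    have harg : Complex.exp (-(Complex.I * (j : ℂ) * (μpar j : ℂ))) * (Complex.exp (Complex.I * (j : ℂ) * (θ : ℂ)) * ((p θ : ℝ) : ℂ)) =
        Complex.exp (((j * (θ - μpar j) : ℝ) : ℂ) * Complex.I) * (p θ : ℂ) := by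
      rw [← mul_assoc, ← Complex.exp_add]
      congr 2
      push_cast; ring
    rw [harg]
    simp only [RCLike.re_to_complex]
    rw [Complex.mul_re, Complex.exp_ofReal_mul_I_re]
    simp
  have hcos_eq : ∀ j ∈ Finset.Icc 1 k,
      ∫ θ, Real.cos (j * (θ - μpar j)) * q θ ∂ν = ∫ θ, Real.cos (j * (θ - μpar j)) * g θ ∂ν := by
    intro j hj
    rw [hkey j q hq0 (hcint q hqint hq0 hq j), hkey j g hg0 (hcint g hgint hg0 hgmeas j),
      hconstraints j hj]
  -- bounded-multiplier integrability
  have hbddmul : ∀ (p : ℝ → ℝ), Integrable p ν → Measurable p → ∀ (b : ℝ → ℝ) (M : ℝ),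
      Measurable b → (∀ θ, |b θ| ≤ M) → Integrable (fun θ => b θ * p θ) ν := by
    intro p hp hpm b M hbm hbd
    apply Integrable.mono' (hp.abs.const_mul M)
    · exact (hbm.mul hpm).aestronglyMeasurable
    · filter_upwards with θ
      rw [Real.norm_eq_abs, abs_mul]
      exact mul_le_mul_of_nonneg_right (hbd θ) (abs_nonneg _)
  have hSqint : Integrable (fun θ => S θ * q θ) ν := hbddmul q hqint hq S C hSmeas hSbd
  have hSgint : Integrable (fun θ => S θ * g θ) ν := hbddmul g hgint hgmeas S C hSmeas hSbd
  have hSq : ∫ θ, S θ * q θ ∂ν = ∫ θ, S θ * g θ ∂ν := by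
    have hterm : ∀ (p : ℝ → ℝ), Integrable p ν → Measurable p → ∀ j ∈ Finset.Icc 1 k,
        Integrable (fun θ => κ j * Real.cos (j * (θ - μpar j)) * p θ) ν := by
      intro p hp hpm j hj
      exact hbddmul p hp hpm _ (κ j)
        (measurable_const.mul ((measurable_const.mul (measurable_id.sub measurable_const)).cos))
        (fun θ => by
          rw [abs_mul, abs_of_nonneg (hκ j hj)]
          exact mul_le_of_le_one_right (hκ j hj) (Real.abs_cos_le_one _))
    have hexp : ∀ (p : ℝ → ℝ), Integrable p ν → Measurable p →
        ∫ θ, S θ * p θ ∂ν = ∑ j ∈ Finset.Icc 1 k, κ j * ∫ θ, Real.cos (j * (θ - μpar j)) * p θ ∂ν := by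
      intro p hp hpm
      have : ∀ θ, S θ * p θ = ∑ j ∈ Finset.Icc 1 k, κ j * Real.cos (j * (θ - μpar j)) * p θ := by
        intro θ; rw [hS]; rw [Finset.sum_mul]
      simp_rw [this]
      rw [integral_finset_sum _ (fun j hj => hterm p hp hpm j hj)]
      apply Finset.sum_congr rfl
      intro j hj
      rw [← integral_const_mul]
      apply integral_congr_ae
      filter_upwards with θ
      ring
    rw [hexp q hqint hq, hexp g hgint hgmeas]
    apply Finset.sum_congr rfl
    intro j hj
    rw [hcos_eq j hj]
  -- step B: log(g/h) = S - log G₀ a.e.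
  have hlogg : ∀ᵐ θ ∂ν, Real.log (g θ / (σ ^ 2 * h₁ θ)) = S θ - Real.log G₀ := by
    filter_upwards [hhpos] with θ hθ
    rw [hgdef θ]
    have h1 : σ ^ 2 * h₁ θ ≠ 0 := ne_of_gt (mul_pos (pow_pos hσ 2) hθ)
    have h2 : σ ^ 2 * h₁ θ * Real.exp (S θ) / G₀ / (σ ^ 2 * h₁ θ) = Real.exp (S θ) / G₀ := by
      field_simp
    rw [h2, Real.log_div (Real.exp_ne_zero _) (ne_of_gt hG₀pos), Real.log_exp]
  have hJqae : (fun θ => Real.log (g θ / (σ ^ 2 * h₁ θ)) * q θ) =ᵐ[ν]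
      fun θ => S θ * q θ - Real.log G₀ * q θ := by
    filter_upwards [hlogg] with θ h; rw [h]; ring
  have hJgae : (fun θ => Real.log (g θ / (σ ^ 2 * h₁ θ)) * g θ) =ᵐ[ν]
      fun θ => S θ * g θ - Real.log G₀ * g θ := by
    filter_upwards [hlogg] with θ h; rw [h]; ring
  have hJqint : Integrable (fun θ => Real.log (g θ / (σ ^ 2 * h₁ θ)) * q θ) ν :=
    (hSqint.sub (hqint.const_mul _)).congr hJqae.symm
  have hJq : ∫ θ, Real.log (g θ / (σ ^ 2 * h₁ θ)) * q θ ∂ν =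
      ∫ θ, S θ * q θ ∂ν - Real.log G₀ * σ ^ 2 := by
    rw [integral_congr_ae hJqae, integral_sub hSqint (hqint.const_mul _), integral_const_mul, hqmass]
  have hJg : ∫ θ, Real.log (g θ / (σ ^ 2 * h₁ θ)) * g θ ∂ν =
      ∫ θ, S θ * g θ ∂ν - Real.log G₀ * σ ^ 2 := by
    rw [integral_congr_ae hJgae, integral_sub hSgint (hgint.const_mul _), integral_const_mul, hgmass]
  have hJeq : ∫ θ, Real.log (g θ / (σ ^ 2 * h₁ θ)) * q θ ∂ν =
      ∫ θ, Real.log (g θ / (σ ^ 2 * h₁ θ)) * g θ ∂ν := by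
    rw [hJq, hJg, hSq]
  -- step C: chain rule for log
  have hsplit : (fun θ => Real.log (q θ / (σ ^ 2 * h₁ θ)) * q θ) =ᵐ[ν]
      fun θ => Real.log (q θ / g θ) * q θ + Real.log (g θ / (σ ^ 2 * h₁ θ)) * q θ := by
    filter_upwards [hhpos, hgpos] with θ hθ hgθ
    rcases eq_or_lt_of_le (hq0 θ) with h0 | hqp
    · simp [← h0]
    · have hsh : 0 < σ ^ 2 * h₁ θ := mul_pos (pow_pos hσ 2) hθ
      have hqg : q θ / (σ ^ 2 * h₁ θ) = (q θ / g θ) * (g θ / (σ ^ 2 * h₁ θ)) := by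
        rw [div_mul_div_comm, mul_comm (q θ) (g θ), mul_div_mul_left _ _ (ne_of_gt hgθ)]
      rw [hqg, Real.log_mul (ne_of_gt (div_pos hqp hgθ)) (ne_of_gt (div_pos hgθ hsh))]
      ring
  have hDae : (fun θ => Real.log (q θ / (σ ^ 2 * h₁ θ)) * q θ -
      Real.log (g θ / (σ ^ 2 * h₁ θ)) * q θ) =ᵐ[ν] fun θ => Real.log (q θ / g θ) * q θ := by
    filter_upwards [hsplit] with θ h
    rw [h]; ring
  have hDint : Integrable (fun θ => Real.log (q θ / g θ) * q θ) ν :=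
    (hIq'.sub hJqint).congr hDae
  have hIqeq : ∫ θ, Real.log (q θ / (σ ^ 2 * h₁ θ)) * q θ ∂ν =
      (∫ θ, Real.log (q θ / g θ) * q θ ∂ν) + ∫ θ, Real.log (g θ / (σ ^ 2 * h₁ θ)) * q θ ∂ν := by
    rw [integral_congr_ae hsplit, integral_add hDint hJqint]
  -- step D: Gibbs
  obtain ⟨hDpos, hDiff⟩ := gibbs_aux q g hq0 hgpos hqint hgint (by rw [hqmass, hgmass]) hDint
  refine ⟨by rw [hIqeq, hJeq]; linarith, ?_, ?_⟩
  · intro h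
    apply hDiff.mp
    rw [hIqeq, hJeq] at h
    linarith
  · intro h
    apply integral_congr_ae
    filter_upwards [h] with θ hθ
    rw [hθ]
end

section
/- Fix k ≥ 1, σ > 0, and the GvM_k spectral density f_σ(θ) = σ² · exp{ Σ_{j=1}^k κ_j cos(j(θ - μ_j)) } / (2π G₀), where G₀ normalizes the density to a probability density. Then among all spectral densities g_σ with total mass σ² satisfying ∫_{-π}^{π} e^{irθ} g_σ(θ) dθ = ∫_{-π}^{π} e^{irθ} f_σ(θ) dθ for r = 1,...,k, the density f_σ maximizes the spectral entropy S(g_σ) = -∫_{-π}^{π} log( g_σ(θ)/(σ²/(2π)) ) g_σ(θ) dθ, and the maximizer is unique up to almost-everywhere equality. -/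
open MeasureTheory Real Set

lemma gibbs_pointwise {a b : ℝ} (ha : 0 ≤ a) (hb : 0 < b) :
    a - b ≤ Real.log (a / b) * a ∧ (Real.log (a / b) * a = a - b ↔ a = b) := by
  rcases ha.eq_or_lt with h0 | h0
  · refine ⟨by rw [← h0]; simp; linarith, ?_⟩
    rw [← h0]
    simp only [mul_zero, zero_sub]
    constructor
    · intro h; linarith
    · intro h; linarith
  · have hba : 0 < b / a := div_pos hb h0
    have hlog : Real.log (a / b) = - Real.log (b / a) := by
      rw [← Real.log_inv]; congr 1; rw [inv_div]
    have key : a ≠ b → Real.log (b / a) < b / a - 1 := by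
      intro hne
      refine Real.log_lt_sub_one_of_pos hba ?_
      intro h1
      apply hne
      field_simp at h1
      linarith
    constructor
    · rcases eq_or_ne a b with rfl | hne
      · simp [div_self h0.ne']
      · have h1 := key hne
        have h2 : Real.log (b / a) * a < (b / a - 1) * a :=
          mul_lt_mul_of_pos_right h1 h0
        have h3 : (b / a - 1) * a = b - a := by field_simp
        rw [hlog]; nlinarith
    · constructor
      · intro heq
        by_contra hne
        have h1 := key hne
        have h2 : Real.log (b / a) * a < (b / a - 1) * a :=
          mul_lt_mul_of_pos_right h1 h0
        have h3 : (b / a - 1) * a = b - a := by field_simp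
        rw [hlog] at heq; nlinarith
      · intro h; subst h; simp [div_self h0.ne']

/-- The GvM_k spectral density maximizes the spectral Shannon entropy among all
spectral densities of total mass `σ²` satisfying the same first `k` autocovariance
constraints; the maximizer is unique up to a.e. equality. -/
theorem gvm_max_spectral_entropy (k : ℕ) (hk : 1 ≤ k) (σ : ℝ) (hσ : 0 < σ)
    (μpar κ : ℕ → ℝ)
    (hμ : ∀ j ∈ Finset.Icc 1 k, μpar j ∈ Ioc (-(π / j)) (π / j))
    (hκ : ∀ j ∈ Finset.Icc 1 k, 0 ≤ κ j)
    (G₀ : ℝ)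
    (hG₀ : G₀ = (2 * π)⁻¹ * ∫ θ in Ioc (-π) π,
      Real.exp (∑ j ∈ Finset.Icc 1 k, κ j * Real.cos (j * (θ - μpar j))))
    (f : ℝ → ℝ)
    (hfdef : ∀ θ, f θ =
      σ ^ 2 * Real.exp (∑ j ∈ Finset.Icc 1 k, κ j * Real.cos (j * (θ - μpar j))) /
        (2 * π * G₀))
    (g : ℝ → ℝ) (hg : Measurable g) (hg0 : ∀ θ, 0 ≤ g θ)
    (hgmass : ∫ θ in Ioc (-π) π, g θ = σ ^ 2)
    (hconstraints : ∀ r ∈ Finset.Icc 1 k,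
      (∫ θ in Ioc (-π) π, Complex.exp (Complex.I * r * θ) * (g θ : ℝ)) =
        ∫ θ in Ioc (-π) π, Complex.exp (Complex.I * r * θ) * (f θ : ℝ))
    (hIg : IntegrableOn (fun θ => Real.log (g θ / (σ ^ 2 / (2 * π))) * g θ) (Ioc (-π) π)) :
    (-∫ θ in Ioc (-π) π, Real.log (g θ / (σ ^ 2 / (2 * π))) * g θ) ≤
      (-∫ θ in Ioc (-π) π, Real.log (f θ / (σ ^ 2 / (2 * π))) * f θ) ∧
    ((-∫ θ in Ioc (-π) π, Real.log (g θ / (σ ^ 2 / (2 * π))) * g θ) =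
        (-∫ θ in Ioc (-π) π, Real.log (f θ / (σ ^ 2 / (2 * π))) * f θ) ↔
      g =ᵐ[volume.restrict (Ioc (-π) π)] f) := by
  have hπ : (0:ℝ) < π := Real.pi_pos
  have h2π : (0:ℝ) < 2 * π := by linarith
  set c : ℝ := σ ^ 2 / (2 * π) with hcdef
  have hc : 0 < c := by positivity
  set h : ℝ → ℝ := fun θ => ∑ j ∈ Finset.Icc 1 k, κ j * Real.cos (j * (θ - μpar j))
    with hhdef
  have hh_cont : Continuous h := by
    rw [hhdef]
    exact continuous_finset_sum _ fun j _ => by fun_prop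
  set M : ℝ := ∑ j ∈ Finset.Icc 1 k, |κ j| with hMdef
  have hhM : ∀ θ, |h θ| ≤ M := by
    intro θ
    simp only [hhdef]
    calc |∑ j ∈ Finset.Icc 1 k, κ j * Real.cos (j * (θ - μpar j))|
        ≤ ∑ j ∈ Finset.Icc 1 k, |κ j * Real.cos (j * (θ - μpar j))| :=
          Finset.abs_sum_le_sum_abs _ _
      _ ≤ M := by
          rw [hMdef]
          refine Finset.sum_le_sum fun j _ => ?_
          rw [abs_mul]
          calc |κ j| * |Real.cos (j * (θ - μpar j))| ≤ |κ j| * 1 := by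
                gcongr
                exact Real.abs_cos_le_one _
            _ = |κ j| := mul_one _
  have hIexp : IntegrableOn (fun θ => Real.exp (h θ)) (Ioc (-π) π) :=
    (Real.continuous_exp.comp hh_cont).integrableOn_Ioc
  have hIntExp_pos : 0 < ∫ θ in Ioc (-π) π, Real.exp (h θ) := by
    rw [setIntegral_pos_iff_support_of_nonneg_ae
      (Filter.Eventually.of_forall fun θ => (Real.exp_pos _).le) hIexp]
    have hsupp : Function.support (fun θ => Real.exp (h θ)) = univ := by
      ext θ; simp [Real.exp_ne_zero]
    rw [hsupp, univ_inter, Real.volume_Ioc]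
    rw [ENNReal.ofReal_pos]
    linarith
  have hG0 : (2 * π) * G₀ = ∫ θ in Ioc (-π) π, Real.exp (h θ) := by
    rw [hG₀]
    simp only [hhdef]
    field_simp
  have hG0pos : 0 < G₀ := by nlinarith
  have hfh : ∀ θ, f θ = σ ^ 2 * Real.exp (h θ) / (2 * π * G₀) := by
    intro θ; simp only [hhdef]; exact hfdef θ
  have hf_pos : ∀ θ, 0 < f θ := fun θ => by rw [hfh θ]; positivity
  have hf_cont : Continuous f := by
    have : f = fun θ => σ ^ 2 * Real.exp (h θ) / (2 * π * G₀) := funext hfh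
    rw [this]
    exact (continuous_const.mul (Real.continuous_exp.comp hh_cont)).div_const _
  have hIf : IntegrableOn f (Ioc (-π) π) := hf_cont.integrableOn_Ioc
  have hf_mass : ∫ θ in Ioc (-π) π, f θ = σ ^ 2 := by
    have e : ∀ θ ∈ Ioc (-π) π, f θ = (σ ^ 2 / (2 * π * G₀)) * Real.exp (h θ) := by
      intro θ _; rw [hfh θ]; ring
    rw [setIntegral_congr_fun measurableSet_Ioc e, integral_const_mul, ← hG0]
    field_simp
  have hIg_int : IntegrableOn g (Ioc (-π) π) := by
    by_contra hcon
    rw [integral_undef hcon] at hgmass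
    exact (by positivity : (0:ℝ) < σ ^ 2).ne hgmass
  -- real and imaginary parts of the constraints
  have hexp_rw : ∀ (r : ℕ) (θ : ℝ),
      Complex.I * (r : ℂ) * (θ : ℂ) = ((r * θ : ℝ) : ℂ) * Complex.I := by
    intro r θ; push_cast; ring
  have hIc : ∀ (u : ℝ → ℝ), IntegrableOn u (Ioc (-π) π) → ∀ r : ℕ,
      IntegrableOn (fun θ : ℝ => Complex.exp (Complex.I * r * θ) * (u θ : ℂ)) (Ioc (-π) π) := by
    intro u hu r
    refine Integrable.bdd_mul hu.ofReal ?_ (c := 1) (Filter.Eventually.of_forall fun θ => ?_)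
    · exact (Complex.continuous_exp.comp
        ((continuous_const.mul continuous_const).mul Complex.continuous_ofReal)).aestronglyMeasurable
    · rw [hexp_rw r θ]
      exact le_of_eq (Complex.norm_exp_ofReal_mul_I _)
  have hre : ∀ (u : ℝ → ℝ) (r : ℕ) (θ : ℝ),
      (Complex.exp (Complex.I * r * θ) * ((u θ : ℝ) : ℂ)).re = Real.cos (r * θ) * u θ := by
    intro u r θ
    rw [hexp_rw r θ]
    simp only [Complex.mul_re, Complex.ofReal_re, Complex.ofReal_im, mul_zero, sub_zero,
      Complex.exp_ofReal_mul_I_re]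
  have him : ∀ (u : ℝ → ℝ) (r : ℕ) (θ : ℝ),
      (Complex.exp (Complex.I * r * θ) * ((u θ : ℝ) : ℂ)).im = Real.sin (r * θ) * u θ := by
    intro u r θ
    rw [hexp_rw r θ]
    simp only [Complex.mul_im, Complex.ofReal_re, Complex.ofReal_im, mul_zero, zero_add,
      Complex.exp_ofReal_mul_I_im]
  have hreint : ∀ (u : ℝ → ℝ), IntegrableOn u (Ioc (-π) π) → ∀ r : ℕ,
      (∫ θ in Ioc (-π) π, Real.cos (r * θ) * u θ) =
        (∫ θ in Ioc (-π) π, Complex.exp (Complex.I * r * θ) * ((u θ : ℝ) : ℂ)).re := by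
    intro u hu r
    have h1 := integral_re (hIc u hu r)
    simp only [RCLike.re_to_complex] at h1
    rw [← h1]
    exact setIntegral_congr_fun measurableSet_Ioc fun θ _ => (hre u r θ).symm
  have himint : ∀ (u : ℝ → ℝ), IntegrableOn u (Ioc (-π) π) → ∀ r : ℕ,
      (∫ θ in Ioc (-π) π, Real.sin (r * θ) * u θ) =
        (∫ θ in Ioc (-π) π, Complex.exp (Complex.I * r * θ) * ((u θ : ℝ) : ℂ)).im := by
    intro u hu r
    have h1 := integral_im (hIc u hu r)
    simp only [RCLike.im_to_complex] at h1
    rw [← h1]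
    exact setIntegral_congr_fun measurableSet_Ioc fun θ _ => (him u r θ).symm
  have hcossin : ∀ r ∈ Finset.Icc 1 k,
      ((∫ θ in Ioc (-π) π, Real.cos (r * θ) * g θ) = ∫ θ in Ioc (-π) π, Real.cos (r * θ) * f θ) ∧
      ((∫ θ in Ioc (-π) π, Real.sin (r * θ) * g θ) = ∫ θ in Ioc (-π) π, Real.sin (r * θ) * f θ) := by
    intro r hr
    have key := hconstraints r hr
    refine ⟨?_, ?_⟩
    · rw [hreint g hIg_int r, hreint f hIf r, key]
    · rw [himint g hIg_int r, himint f hIf r, key]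
  -- integrability of trig * u
  have hIcosu : ∀ (u : ℝ → ℝ), IntegrableOn u (Ioc (-π) π) → ∀ r : ℕ,
      IntegrableOn (fun θ => Real.cos (r * θ) * u θ) (Ioc (-π) π) := by
    intro u hu r
    refine hu.bdd_mul ?_ (c := 1) (Filter.Eventually.of_forall fun θ => ?_)
    · exact (Real.continuous_cos.comp (continuous_const.mul continuous_id)).aestronglyMeasurable
    · rw [Real.norm_eq_abs]; exact Real.abs_cos_le_one _
  have hIsinu : ∀ (u : ℝ → ℝ), IntegrableOn u (Ioc (-π) π) → ∀ r : ℕ,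
      IntegrableOn (fun θ => Real.sin (r * θ) * u θ) (Ioc (-π) π) := by
    intro u hu r
    refine hu.bdd_mul ?_ (c := 1) (Filter.Eventually.of_forall fun θ => ?_)
    · exact (Real.continuous_sin.comp (continuous_const.mul continuous_id)).aestronglyMeasurable
    · rw [Real.norm_eq_abs]; exact Real.abs_sin_le_one _
  have hIcosmu : ∀ (u : ℝ → ℝ), IntegrableOn u (Ioc (-π) π) → ∀ r : ℕ,
      IntegrableOn (fun θ => Real.cos (r * (θ - μpar r)) * u θ) (Ioc (-π) π) := by
    intro u hu r
    refine hu.bdd_mul ?_ (c := 1) (Filter.Eventually.of_forall fun θ => ?_)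
    · exact (Real.continuous_cos.comp
        (continuous_const.mul (continuous_id.sub continuous_const))).aestronglyMeasurable
    · rw [Real.norm_eq_abs]; exact Real.abs_cos_le_one _
  -- the shifted-cosine constraint
  have htrig : ∀ r ∈ Finset.Icc 1 k,
      (∫ θ in Ioc (-π) π, Real.cos (r * (θ - μpar r)) * g θ) =
        ∫ θ in Ioc (-π) π, Real.cos (r * (θ - μpar r)) * f θ := by
    intro r hr
    have hdecomp : ∀ (u : ℝ → ℝ) θ, Real.cos (r * (θ - μpar r)) * u θ =
        Real.cos (r * μpar r) * (Real.cos (r * θ) * u θ) +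
          Real.sin (r * μpar r) * (Real.sin (r * θ) * u θ) := by
      intro u θ
      rw [show (r : ℝ) * (θ - μpar r) = r * θ - r * μpar r by ring, Real.cos_sub]
      ring
    have split : ∀ (u : ℝ → ℝ), IntegrableOn u (Ioc (-π) π) →
        (∫ θ in Ioc (-π) π, Real.cos (r * (θ - μpar r)) * u θ) =
          Real.cos (r * μpar r) * (∫ θ in Ioc (-π) π, Real.cos (r * θ) * u θ) +
            Real.sin (r * μpar r) * (∫ θ in Ioc (-π) π, Real.sin (r * θ) * u θ) := by
      intro u hu
      rw [setIntegral_congr_fun measurableSet_Ioc fun θ _ => hdecomp u θ,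
        integral_add ((hIcosu u hu r).const_mul _) ((hIsinu u hu r).const_mul _),
        integral_const_mul, integral_const_mul]
    rw [split g hIg_int, split f hIf, (hcossin r hr).1, (hcossin r hr).2]
  -- equality of the h-integrals
  have hIhu : ∀ (u : ℝ → ℝ), IntegrableOn u (Ioc (-π) π) →
      IntegrableOn (fun θ => h θ * u θ) (Ioc (-π) π) := by
    intro u hu
    exact hu.bdd_mul hh_cont.aestronglyMeasurable (c := M) (Filter.Eventually.of_forall fun θ => by
      rw [Real.norm_eq_abs]; exact hhM θ)
  have hexpand : ∀ (u : ℝ → ℝ), IntegrableOn u (Ioc (-π) π) →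
      (∫ θ in Ioc (-π) π, h θ * u θ) =
        ∑ j ∈ Finset.Icc 1 k, κ j * ∫ θ in Ioc (-π) π, Real.cos (j * (θ - μpar j)) * u θ := by
    intro u hu
    have e : ∀ θ ∈ Ioc (-π) π, h θ * u θ =
        ∑ j ∈ Finset.Icc 1 k, κ j * (Real.cos (j * (θ - μpar j)) * u θ) := by
      intro θ _
      simp only [hhdef]
      rw [Finset.sum_mul]
      exact Finset.sum_congr rfl fun j _ => by ring
    rw [setIntegral_congr_fun measurableSet_Ioc e,
      integral_finset_sum _ fun j _ => (hIcosmu u hu j).const_mul _]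
    exact Finset.sum_congr rfl fun j _ => integral_const_mul _ _
  have hhg_eq : (∫ θ in Ioc (-π) π, h θ * g θ) = ∫ θ in Ioc (-π) π, h θ * f θ := by
    rw [hexpand g hIg_int, hexpand f hIf]
    exact Finset.sum_congr rfl fun j hj => by rw [htrig j hj]
  -- log of f over c
  have hlogf : ∀ θ, Real.log (f θ / c) = h θ - Real.log G₀ := by
    intro θ
    have e : f θ / c = Real.exp (h θ) / G₀ := by
      rw [hfh θ, hcdef]
      field_simp
    rw [e, Real.log_div (Real.exp_ne_zero _) hG0pos.ne', Real.log_exp]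
  -- pointwise identity for the entropy integrand
  have hid : ∀ θ, Real.log (g θ / f θ) * g θ =
      Real.log (g θ / c) * g θ - (h θ - Real.log G₀) * g θ := by
    intro θ
    rcases (hg0 θ).eq_or_lt with h0 | h0
    · rw [← h0]; ring
    · have hfne := (hf_pos θ).ne'
      have hgf : g θ / f θ = (g θ / c) / (f θ / c) := by
        field_simp
      rw [hgf, Real.log_div (div_pos h0 hc).ne' (div_pos (hf_pos θ) hc).ne', hlogf θ]
      ring
  -- Φ and its properties
  set Φ : ℝ → ℝ := fun θ => Real.log (g θ / f θ) * g θ - g θ + f θ with hΦdef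
  have hΦ0 : ∀ θ, 0 ≤ Φ θ := by
    intro θ
    have := (gibbs_pointwise (hg0 θ) (hf_pos θ)).1
    simp only [hΦdef]; linarith
  have hΦeq : ∀ θ, Φ θ = 0 ↔ g θ = f θ := by
    intro θ
    have hgp := (gibbs_pointwise (hg0 θ) (hf_pos θ)).2
    simp only [hΦdef]
    constructor
    · intro h'; exact hgp.mp (by linarith)
    · intro h'; have := hgp.mpr h'; linarith
  have hIhg2 : IntegrableOn (fun θ => (h θ - Real.log G₀) * g θ) (Ioc (-π) π) := by
    refine hIg_int.bdd_mul (hh_cont.sub continuous_const).aestronglyMeasurable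
      (c := M + |Real.log G₀|) (Filter.Eventually.of_forall fun θ => ?_)
    rw [Real.norm_eq_abs]
    calc |h θ - Real.log G₀| ≤ |h θ| + |Real.log G₀| := abs_sub _ _
      _ ≤ M + |Real.log G₀| := by linarith [hhM θ]
  have hΦalt : Φ = fun θ =>
      (Real.log (g θ / c) * g θ - (h θ - Real.log G₀) * g θ) - g θ + f θ := by
    funext θ; simp only [hΦdef, hid θ]
  have hIΦ : IntegrableOn Φ (Ioc (-π) π) := by
    rw [hΦalt]
    exact ((hIg.sub hIhg2).sub hIg_int).add hIf
  -- computing the integral of Φ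
  have e2 : (∫ θ in Ioc (-π) π, (h θ - Real.log G₀) * g θ)
      = (∫ θ in Ioc (-π) π, h θ * g θ) - Real.log G₀ * σ ^ 2 := by
    have e : ∀ θ ∈ Ioc (-π) π, (h θ - Real.log G₀) * g θ =
        h θ * g θ - Real.log G₀ * g θ := fun θ _ => by ring
    rw [setIntegral_congr_fun measurableSet_Ioc e,
      integral_sub (hIhu g hIg_int) (hIg_int.const_mul _), integral_const_mul, hgmass]
  have e3 : (∫ θ in Ioc (-π) π, Real.log (f θ / c) * f θ)
      = (∫ θ in Ioc (-π) π, h θ * f θ) - Real.log G₀ * σ ^ 2 := by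
    have e : ∀ θ ∈ Ioc (-π) π, Real.log (f θ / c) * f θ =
        h θ * f θ - Real.log G₀ * f θ := by
      intro θ _; rw [hlogf θ]; ring
    rw [setIntegral_congr_fun measurableSet_Ioc e,
      integral_sub (hIhu f hIf) (hIf.const_mul _), integral_const_mul, hf_mass]
  have hintΦ : (∫ θ in Ioc (-π) π, Φ θ) =
      (∫ θ in Ioc (-π) π, Real.log (g θ / c) * g θ) -
        (∫ θ in Ioc (-π) π, Real.log (f θ / c) * f θ) := by
    have e1 : (∫ θ in Ioc (-π) π, Φ θ) =
        ((∫ θ in Ioc (-π) π, Real.log (g θ / c) * g θ) -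
          (∫ θ in Ioc (-π) π, (h θ - Real.log G₀) * g θ)) - σ ^ 2 + σ ^ 2 := by
      have i1 : IntegrableOn
          (fun θ => Real.log (g θ / c) * g θ - (h θ - Real.log G₀) * g θ) (Ioc (-π) π) :=
        hIg.sub hIhg2
      have i2 : IntegrableOn
          (fun θ => Real.log (g θ / c) * g θ - (h θ - Real.log G₀) * g θ - g θ) (Ioc (-π) π) :=
        i1.sub hIg_int
      simp only [hΦalt]
      rw [integral_add i2 hIf, integral_sub i1 hIg_int, integral_sub hIg hIhg2, hgmass, hf_mass]
    rw [e1, e2, e3, hhg_eq]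
    ring
  have hnn : 0 ≤ ∫ θ in Ioc (-π) π, Φ θ :=
    setIntegral_nonneg measurableSet_Ioc fun θ _ => hΦ0 θ
  constructor
  · linarith
  · constructor
    · intro heq
      have h0 : (∫ θ in Ioc (-π) π, Φ θ) = 0 := by linarith
      have hae : Φ =ᵐ[volume.restrict (Ioc (-π) π)] 0 :=
        (integral_eq_zero_iff_of_nonneg hΦ0 hIΦ).mp h0
      filter_upwards [hae] with θ hθ
      exact (hΦeq θ).mp hθ
    · intro hae
      have hΦae : Φ =ᵐ[volume.restrict (Ioc (-π) π)] 0 := by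
        filter_upwards [hae] with θ hθ
        exact (hΦeq θ).mpr hθ
      have h0 : (∫ θ in Ioc (-π) π, Φ θ) = 0 := by
        rw [integral_congr_ae hΦae]
        simp
      linarith
end

section
/- For a spectral density g_σ with total mass σ² satisfying ∫_{-π}^{π} cos(rθ) g_σ(θ) dθ = ν_r and ∫_{-π}^{π} sin(rθ) g_σ(θ) dθ = ξ_r for r = 1,...,k, the spectral entropy satisfies S(g_σ) ≤ σ² log G₀(δ₁,...,δ_{k-1},κ₁,...,κ_k) − Σ_{r=1}^k κ_r (ν_r cos(r μ_r) + ξ_r sin(r μ_r)), where the parameters μ_r, κ_r are chosen so that the GvM_k spectral density with these parameters satisfies the same moment constraints; equality holds iff g_σ equals that GvM_k spectral density a.e. -/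
open MeasureTheory Real Set

lemma gibbs_pt (a b : ℝ) (ha : 0 ≤ a) (hb : 0 < b) :
    0 ≤ Real.log (a / b) * a - a + b ∧ (Real.log (a / b) * a - a + b = 0 ↔ a = b) := by
  rcases ha.eq_or_lt with h0 | h0
  · simp [← h0, hb.ne, hb.le]; exact fun h => hb.ne h.symm
  · have hkey : a ≠ b → 0 < Real.log (a / b) * a - a + b := by
      intro hne
      have hba : (0:ℝ) < b / a := div_pos hb h0
      have hba1 : b / a ≠ 1 := by
        intro h; exact hne (by field_simp at h; linarith)
      have h1 : Real.log (b / a) < b / a - 1 := Real.log_lt_sub_one_of_pos hba hba1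
      have h2 : Real.log (b / a) = - Real.log (a / b) := by
        rw [← Real.log_inv, inv_div]
      rw [h2] at h1
      have h3 : (b / a - 1) * a = b - a := by field_simp
      nlinarith
    rcases eq_or_ne a b with he | hne
    · subst he; simp [div_self h0.ne']
    · have := hkey hne
      exact ⟨this.le, by constructor <;> intro h <;> [linarith; exact absurd h hne]⟩

lemma gvm_exp_mass (k : ℕ) (hk : 1 ≤ k) (μpar κ : ℕ → ℝ) (δ : ℕ → ℝ)
    (hδ : ∀ j ∈ Finset.Icc 2 k,
      δ j = (2 * π / j) * Int.fract ((μpar 1 - μpar j) / (2 * π / j))) :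
    (∫ θ in Ioc (-π) π,
        Real.exp (∑ j ∈ Finset.Icc 1 k, κ j * Real.cos (j * (θ - μpar j))))
      = ∫ θ in Ioc 0 (2 * π),
        Real.exp (κ 1 * Real.cos θ +
          ∑ j ∈ Finset.Icc 2 k, κ j * Real.cos (j * (θ + δ j))) := by
  have hπ : (0:ℝ) < π := Real.pi_pos
  set H : ℝ → ℝ := fun θ =>
    Real.exp (∑ j ∈ Finset.Icc 1 k, κ j * Real.cos (j * (θ - μpar j))) with hH
  have hHper : Function.Periodic H (2 * π) := by
    intro θ
    simp only [hH]
    congr 1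
    refine Finset.sum_congr rfl fun j hj => ?_
    congr 1
    have : (j:ℝ) * (θ + 2 * π - μpar j) = (j:ℝ) * (θ - μpar j) + (j:ℤ) * (2 * π) := by
      push_cast; ring
    rw [this, Real.cos_add_int_mul_two_pi]
  have hHcont : Continuous H := by
    apply Real.continuous_exp.comp
    exact continuous_finset_sum _ fun j _ =>
      continuous_const.mul
        (Real.continuous_cos.comp (continuous_const.mul (continuous_id.sub continuous_const)))
  have hshift : ∀ θ : ℝ, H (θ + μpar 1) =
      Real.exp (κ 1 * Real.cos θ +
        ∑ j ∈ Finset.Icc 2 k, κ j * Real.cos (j * (θ + δ j))) := by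
    intro θ
    simp only [hH]
    congr 1
    have hins : Finset.Icc 1 k = insert 1 (Finset.Icc 2 k) := by
      ext j; simp [Finset.mem_Icc, Finset.mem_insert]; omega
    rw [hins, Finset.sum_insert (by simp [Finset.mem_Icc])]
    congr 1
    · norm_num
    · refine Finset.sum_congr rfl fun j hj => ?_
      congr 1
      have hj2 : 2 ≤ j := (Finset.mem_Icc.mp hj).1
      have hjne : (j:ℝ) ≠ 0 := by positivity
      set x : ℝ := (μpar 1 - μpar j) / (2 * π / j) with hx
      have hδj : δ j = (2 * π / j) * (x - ⌊x⌋) := by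
        rw [hδ j hj, Int.fract]
      have h2x : 2 * π * x = j * (μpar 1 - μpar j) := by
        rw [hx]; field_simp
      have hjmul : (j:ℝ) * (2 * π / j) = 2 * π := by field_simp
      have hjd : (j:ℝ) * δ j = (j:ℝ) * (μpar 1 - μpar j) - (⌊x⌋:ℝ) * (2 * π) := by
        rw [hδj]
        calc (j:ℝ) * (2 * π / j * (x - ⌊x⌋)) = ((j:ℝ) * (2 * π / j)) * (x - ⌊x⌋) := by ring
          _ = 2 * π * x - (⌊x⌋:ℝ) * (2 * π) := by rw [hjmul]; ring
          _ = (j:ℝ) * (μpar 1 - μpar j) - (⌊x⌋:ℝ) * (2 * π) := by rw [h2x]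
      have : (j:ℝ) * (θ + δ j) =
          (j:ℝ) * (θ + μpar 1 - μpar j) + (-⌊x⌋ : ℤ) * (2 * π) := by
        have expand : (j:ℝ) * (θ + δ j) = (j:ℝ) * θ + (j:ℝ) * (δ j) := by ring
        rw [expand, hjd]; push_cast; ring
      rw [this, Real.cos_add_int_mul_two_pi]
  calc (∫ θ in Ioc (-π) π, H θ)
      = ∫ θ in (-π)..π, H θ := (intervalIntegral.integral_of_le (by linarith)).symm
    _ = ∫ θ in (-π)..(-π + 2*π), H θ := by ring_nf
    _ = ∫ θ in (μpar 1)..(μpar 1 + 2*π), H θ := hHper.intervalIntegral_add_eq _ _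
    _ = ∫ θ in (0:ℝ)..(2*π), H (θ + μpar 1) := by
        rw [intervalIntegral.integral_comp_add_right]; ring_nf
    _ = ∫ θ in (0:ℝ)..(2*π), Real.exp (κ 1 * Real.cos θ +
          ∑ j ∈ Finset.Icc 2 k, κ j * Real.cos (j * (θ + δ j))) := by
        simp_rw [hshift]
    _ = ∫ θ in Ioc 0 (2*π), Real.exp (κ 1 * Real.cos θ +
          ∑ j ∈ Finset.Icc 2 k, κ j * Real.cos (j * (θ + δ j))) :=
        intervalIntegral.integral_of_le (by linarith)

/-- Upper bound on the spectral Shannon entropy of a spectral density satisfying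
the autocovariance constraints `ν_r, ξ_r`, `r = 1,…,k`, in terms of the normalizing
constant `G₀` of the GvM_k spectral density with the same constraints; equality
holds iff the density is the GvM_k spectral density a.e. -/
theorem gvm_entropy_upper_bound (k : ℕ) (hk : 1 ≤ k) (σ : ℝ) (hσ : 0 < σ)
    (μpar κ ν ξ : ℕ → ℝ) (δ : ℕ → ℝ)
    (hμ : ∀ j ∈ Finset.Icc 1 k, μpar j ∈ Ioc (-(π / j)) (π / j))
    (hκ : ∀ j ∈ Finset.Icc 1 k, 0 ≤ κ j)
    (hδ : ∀ j ∈ Finset.Icc 2 k,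
      δ j = (2 * π / j) * Int.fract ((μpar 1 - μpar j) / (2 * π / j)))
    (G₀ : ℝ)
    (hG₀ : G₀ = (2 * π)⁻¹ * ∫ θ in Ioc 0 (2 * π),
      Real.exp (κ 1 * Real.cos θ +
        ∑ j ∈ Finset.Icc 2 k, κ j * Real.cos (j * (θ + δ j))))
    (f : ℝ → ℝ)
    (hfdef : ∀ θ, f θ =
      σ ^ 2 * Real.exp (∑ j ∈ Finset.Icc 1 k, κ j * Real.cos (j * (θ - μpar j))) /
        (2 * π * G₀))
    (hfconstraints : ∀ r ∈ Finset.Icc 1 k,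
      (∫ θ in Ioc (-π) π, Real.cos (r * θ) * f θ) = ν r ∧
      (∫ θ in Ioc (-π) π, Real.sin (r * θ) * f θ) = ξ r)
    (g : ℝ → ℝ) (hg : Measurable g) (hg0 : ∀ θ, 0 ≤ g θ)
    (hgmass : ∫ θ in Ioc (-π) π, g θ = σ ^ 2)
    (hgconstraints : ∀ r ∈ Finset.Icc 1 k,
      (∫ θ in Ioc (-π) π, Real.cos (r * θ) * g θ) = ν r ∧
      (∫ θ in Ioc (-π) π, Real.sin (r * θ) * g θ) = ξ r)
    (hIg : IntegrableOn (fun θ => Real.log (g θ / (σ ^ 2 / (2 * π))) * g θ) (Ioc (-π) π)) :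
    (-∫ θ in Ioc (-π) π, Real.log (g θ / (σ ^ 2 / (2 * π))) * g θ) ≤
      σ ^ 2 * Real.log G₀ -
        ∑ r ∈ Finset.Icc 1 k, κ r * (ν r * Real.cos (r * μpar r) + ξ r * Real.sin (r * μpar r)) ∧
    ((-∫ θ in Ioc (-π) π, Real.log (g θ / (σ ^ 2 / (2 * π))) * g θ) =
        σ ^ 2 * Real.log G₀ -
          ∑ r ∈ Finset.Icc 1 k, κ r * (ν r * Real.cos (r * μpar r) + ξ r * Real.sin (r * μpar r)) ↔
      g =ᵐ[volume.restrict (Ioc (-π) π)] f) := by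
  have hπ : (0:ℝ) < π := Real.pi_pos
  have hσ2 : (0:ℝ) < σ ^ 2 := by positivity
  -- positivity of G₀
  have hGexp_cont : Continuous (fun θ : ℝ => Real.exp (κ 1 * Real.cos θ +
      ∑ j ∈ Finset.Icc 2 k, κ j * Real.cos (j * (θ + δ j)))) := by
    apply Real.continuous_exp.comp
    apply Continuous.add
    · exact continuous_const.mul Real.continuous_cos
    · exact continuous_finset_sum _ fun j _ => continuous_const.mul
        (Real.continuous_cos.comp (continuous_const.mul (continuous_id.add continuous_const)))
  have hG₀pos : 0 < G₀ := by
    rw [hG₀]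
    apply mul_pos (by positivity)
    rw [← intervalIntegral.integral_of_le (by positivity : (0:ℝ) ≤ 2 * π)]
    exact intervalIntegral.intervalIntegral_pos_of_pos (hGexp_cont.intervalIntegrable _ _)
      (fun x => Real.exp_pos _) (by positivity)
  have h2πG : (0:ℝ) < 2 * π * G₀ := by positivity
  have hfpos : ∀ θ, 0 < f θ := fun θ => by
    rw [hfdef θ]; exact div_pos (by positivity) h2πG
  -- mass of f
  have hfmass : ∫ θ in Ioc (-π) π, f θ = σ ^ 2 := by
    have hfe : ∀ θ, f θ = (σ ^ 2 / (2 * π * G₀)) *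
        Real.exp (∑ j ∈ Finset.Icc 1 k, κ j * Real.cos (j * (θ - μpar j))) := by
      intro θ; rw [hfdef θ]; ring
    simp_rw [hfe]
    rw [integral_const_mul, gvm_exp_mass k hk μpar κ δ hδ]
    have h2 : (∫ θ in Ioc 0 (2 * π), Real.exp (κ 1 * Real.cos θ +
        ∑ j ∈ Finset.Icc 2 k, κ j * Real.cos (j * (θ + δ j)))) = 2 * π * G₀ := by
      rw [hG₀]; field_simp
    rw [h2, div_mul_cancel₀ _ h2πG.ne']
  -- integrability of g and f
  have hgi : IntegrableOn g (Ioc (-π) π) := by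
    by_contra hcon
    rw [MeasureTheory.integral_undef hcon] at hgmass
    exact hσ2.ne' hgmass.symm
  have hfc : Continuous f := by
    have hfe : f = fun θ => σ ^ 2 * Real.exp (∑ j ∈ Finset.Icc 1 k,
        κ j * Real.cos (j * (θ - μpar j))) / (2 * π * G₀) := funext hfdef
    rw [hfe]
    apply Continuous.div_const
    exact continuous_const.mul (Real.continuous_exp.comp (continuous_finset_sum _ fun j _ =>
      continuous_const.mul (Real.continuous_cos.comp
        (continuous_const.mul (continuous_id.sub continuous_const)))))
  have hfi : IntegrableOn f (Ioc (-π) π) := hfc.integrableOn_Ioc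
  -- bounded multiplier integrability helper
  have hbm : ∀ (φ : ℝ → ℝ), Continuous φ → (∃ C, ∀ x, ‖φ x‖ ≤ C) →
      IntegrableOn (fun θ => φ θ * g θ) (Ioc (-π) π) := fun φ hφ hb =>
    by obtain ⟨C, hC⟩ := hb; exact hgi.bdd_mul hφ.aestronglyMeasurable (Filter.Eventually.of_forall hC)
  have hterm_int : ∀ j, IntegrableOn
      (fun θ => (κ j * Real.cos (j * (θ - μpar j))) * g θ) (Ioc (-π) π) := by
    intro j
    refine hbm _ (continuous_const.mul (Real.continuous_cos.comp
      (continuous_const.mul (continuous_id.sub continuous_const)))) ⟨|κ j|, fun x => ?_⟩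
    rw [Real.norm_eq_abs, abs_mul]
    have h1 := Real.abs_cos_le_one ((j:ℝ) * (x - μpar j))
    nlinarith [abs_nonneg (κ j), abs_nonneg (Real.cos ((j:ℝ) * (x - μpar j)))]
  have hEg_int : IntegrableOn (fun θ => (∑ j ∈ Finset.Icc 1 k,
      κ j * Real.cos (j * (θ - μpar j))) * g θ) (Ioc (-π) π) := by
    have : (fun θ => (∑ j ∈ Finset.Icc 1 k, κ j * Real.cos (j * (θ - μpar j))) * g θ)
        = fun θ => ∑ j ∈ Finset.Icc 1 k, (κ j * Real.cos (j * (θ - μpar j))) * g θ :=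
      funext fun θ => by rw [Finset.sum_mul]
    rw [this]
    exact integrable_finset_sum _ fun j _ => hterm_int j
  -- log of f
  have hlogf : ∀ θ, Real.log (f θ / (σ ^ 2 / (2 * π))) =
      (∑ j ∈ Finset.Icc 1 k, κ j * Real.cos (j * (θ - μpar j))) - Real.log G₀ := by
    intro θ
    have : f θ / (σ ^ 2 / (2 * π)) =
        Real.exp (∑ j ∈ Finset.Icc 1 k, κ j * Real.cos (j * (θ - μpar j))) / G₀ := by
      rw [hfdef θ]; field_simp
    rw [this, Real.log_div (Real.exp_ne_zero _) hG₀pos.ne', Real.log_exp]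
  have hM_eq : ∀ θ, Real.log (f θ / (σ ^ 2 / (2 * π))) * g θ =
      (∑ j ∈ Finset.Icc 1 k, κ j * Real.cos (j * (θ - μpar j))) * g θ
        - Real.log G₀ * g θ := fun θ => by rw [hlogf θ]; ring
  have hMint : IntegrableOn (fun θ => Real.log (f θ / (σ ^ 2 / (2 * π))) * g θ)
      (Ioc (-π) π) := by
    have : (fun θ => Real.log (f θ / (σ ^ 2 / (2 * π))) * g θ)
        = fun θ => (∑ j ∈ Finset.Icc 1 k, κ j * Real.cos (j * (θ - μpar j))) * g θ
          - Real.log G₀ * g θ := funext hM_eq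
    rw [this]
    exact hEg_int.sub (hgi.const_mul _)
  -- value of ∫ M
  have hterm_val : ∀ j ∈ Finset.Icc 1 k,
      (∫ θ in Ioc (-π) π, (κ j * Real.cos (j * (θ - μpar j))) * g θ)
        = κ j * (ν j * Real.cos (j * μpar j) + ξ j * Real.sin (j * μpar j)) := by
    intro j hj
    obtain ⟨hν, hξ⟩ := hgconstraints j hj
    have hpt : ∀ θ, (κ j * Real.cos ((j:ℝ) * (θ - μpar j))) * g θ
        = (κ j * Real.cos ((j:ℝ) * μpar j)) * (Real.cos ((j:ℝ) * θ) * g θ)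
          + (κ j * Real.sin ((j:ℝ) * μpar j)) * (Real.sin ((j:ℝ) * θ) * g θ) := by
      intro θ
      have h1 : (j:ℝ) * (θ - μpar j) = (j:ℝ) * θ - (j:ℝ) * μpar j := by ring
      rw [h1, Real.cos_sub]; ring
    have hcint : IntegrableOn (fun θ => Real.cos ((j:ℝ) * θ) * g θ) (Ioc (-π) π) :=
      hbm _ (Real.continuous_cos.comp (continuous_const.mul continuous_id))
        ⟨1, fun x => by rw [Real.norm_eq_abs]; exact Real.abs_cos_le_one _⟩
    have hsint : IntegrableOn (fun θ => Real.sin ((j:ℝ) * θ) * g θ) (Ioc (-π) π) :=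
      hbm _ (Real.continuous_sin.comp (continuous_const.mul continuous_id))
        ⟨1, fun x => by rw [Real.norm_eq_abs]; exact Real.abs_sin_le_one _⟩
    calc (∫ θ in Ioc (-π) π, (κ j * Real.cos ((j:ℝ) * (θ - μpar j))) * g θ)
        = ∫ θ in Ioc (-π) π,
            ((κ j * Real.cos ((j:ℝ) * μpar j)) * (Real.cos ((j:ℝ) * θ) * g θ)
              + (κ j * Real.sin ((j:ℝ) * μpar j)) * (Real.sin ((j:ℝ) * θ) * g θ)) :=
          integral_congr_ae (Filter.Eventually.of_forall hpt)
      _ = (κ j * Real.cos ((j:ℝ) * μpar j)) * (∫ θ in Ioc (-π) π, Real.cos ((j:ℝ) * θ) * g θ)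
            + (κ j * Real.sin ((j:ℝ) * μpar j)) * (∫ θ in Ioc (-π) π, Real.sin ((j:ℝ) * θ) * g θ) := by
          rw [integral_add (hcint.const_mul _) (hsint.const_mul _),
            integral_const_mul, integral_const_mul]
      _ = κ j * (ν j * Real.cos ((j:ℝ) * μpar j) + ξ j * Real.sin ((j:ℝ) * μpar j)) := by
          rw [hν, hξ]; ring
  have hIM : (∫ θ in Ioc (-π) π, Real.log (f θ / (σ ^ 2 / (2 * π))) * g θ)
      = (∑ r ∈ Finset.Icc 1 k,
          κ r * (ν r * Real.cos (r * μpar r) + ξ r * Real.sin (r * μpar r)))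
        - σ ^ 2 * Real.log G₀ := by
    calc (∫ θ in Ioc (-π) π, Real.log (f θ / (σ ^ 2 / (2 * π))) * g θ)
        = ∫ θ in Ioc (-π) π,
            ((∑ j ∈ Finset.Icc 1 k, κ j * Real.cos (j * (θ - μpar j))) * g θ
              - Real.log G₀ * g θ) := integral_congr_ae (Filter.Eventually.of_forall hM_eq)
      _ = (∫ θ in Ioc (-π) π,
            (∑ j ∈ Finset.Icc 1 k, κ j * Real.cos (j * (θ - μpar j))) * g θ)
          - ∫ θ in Ioc (-π) π, Real.log G₀ * g θ :=
          integral_sub hEg_int (hgi.const_mul _)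
      _ = (∫ θ in Ioc (-π) π,
            ∑ j ∈ Finset.Icc 1 k, (κ j * Real.cos (j * (θ - μpar j))) * g θ)
          - Real.log G₀ * σ ^ 2 := by
          rw [integral_const_mul, hgmass]
          congr 1
          exact integral_congr_ae (Filter.Eventually.of_forall fun θ => by
            simp only [Finset.sum_mul])
      _ = (∑ j ∈ Finset.Icc 1 k,
            ∫ θ in Ioc (-π) π, (κ j * Real.cos (j * (θ - μpar j))) * g θ)
          - Real.log G₀ * σ ^ 2 := by
          rw [integral_finset_sum _ fun j _ => hterm_int j]
      _ = (∑ r ∈ Finset.Icc 1 k,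
            κ r * (ν r * Real.cos (r * μpar r) + ξ r * Real.sin (r * μpar r)))
          - σ ^ 2 * Real.log G₀ := by
          rw [Finset.sum_congr rfl hterm_val]; ring
  -- pointwise decomposition of the KL integrand
  have hc : (0:ℝ) < σ ^ 2 / (2 * π) := by positivity
  have hpt : ∀ θ, Real.log (g θ / f θ) * g θ - g θ + f θ
      = Real.log (g θ / (σ ^ 2 / (2 * π))) * g θ
        - Real.log (f θ / (σ ^ 2 / (2 * π))) * g θ - g θ + f θ := by
    intro θ
    rcases (hg0 θ).eq_or_lt with h0 | h0
    · simp [← h0]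
    · rw [Real.log_div h0.ne' (hfpos θ).ne', Real.log_div h0.ne' hc.ne',
        Real.log_div (hfpos θ).ne' hc.ne']
      ring
  have hhint : IntegrableOn (fun θ => Real.log (g θ / f θ) * g θ - g θ + f θ)
      (Ioc (-π) π) := by
    have : (fun θ => Real.log (g θ / f θ) * g θ - g θ + f θ)
        = fun θ => Real.log (g θ / (σ ^ 2 / (2 * π))) * g θ
          - Real.log (f θ / (σ ^ 2 / (2 * π))) * g θ - g θ + f θ := funext hpt
    rw [this]
    exact ((hIg.sub hMint).sub hgi).add hfi
  have hIh : (∫ θ in Ioc (-π) π, (Real.log (g θ / f θ) * g θ - g θ + f θ))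
      = (∫ θ in Ioc (-π) π, Real.log (g θ / (σ ^ 2 / (2 * π))) * g θ)
        - ∫ θ in Ioc (-π) π, Real.log (f θ / (σ ^ 2 / (2 * π))) * g θ := by
    calc (∫ θ in Ioc (-π) π, (Real.log (g θ / f θ) * g θ - g θ + f θ))
        = ∫ θ in Ioc (-π) π, (Real.log (g θ / (σ ^ 2 / (2 * π))) * g θ
            - Real.log (f θ / (σ ^ 2 / (2 * π))) * g θ - g θ + f θ) :=
          integral_congr_ae (Filter.Eventually.of_forall hpt)
      _ = (∫ θ in Ioc (-π) π, (Real.log (g θ / (σ ^ 2 / (2 * π))) * g θ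
            - Real.log (f θ / (σ ^ 2 / (2 * π))) * g θ - g θ)) + ∫ θ in Ioc (-π) π, f θ :=
          integral_add ((hIg.sub hMint).sub hgi) hfi
      _ = ((∫ θ in Ioc (-π) π, (Real.log (g θ / (σ ^ 2 / (2 * π))) * g θ
            - Real.log (f θ / (σ ^ 2 / (2 * π))) * g θ)) - ∫ θ in Ioc (-π) π, g θ)
          + ∫ θ in Ioc (-π) π, f θ := by
          congr 1
          exact integral_sub (hIg.sub hMint) hgi
      _ = (((∫ θ in Ioc (-π) π, Real.log (g θ / (σ ^ 2 / (2 * π))) * g θ)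
            - ∫ θ in Ioc (-π) π, Real.log (f θ / (σ ^ 2 / (2 * π))) * g θ)
            - ∫ θ in Ioc (-π) π, g θ) + ∫ θ in Ioc (-π) π, f θ := by
          congr 2
          exact integral_sub hIg hMint
      _ = _ := by rw [hgmass, hfmass]; ring
  have hnn : 0 ≤ ∫ θ in Ioc (-π) π, (Real.log (g θ / f θ) * g θ - g θ + f θ) :=
    setIntegral_nonneg measurableSet_Ioc fun θ _ =>
      (gibbs_pt (g θ) (f θ) (hg0 θ) (hfpos θ)).1
  have hz : (∫ θ in Ioc (-π) π, (Real.log (g θ / f θ) * g θ - g θ + f θ)) = 0 ↔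
      g =ᵐ[volume.restrict (Ioc (-π) π)] f := by
    rw [integral_eq_zero_iff_of_nonneg_ae
      (Filter.Eventually.of_forall fun θ => (gibbs_pt (g θ) (f θ) (hg0 θ) (hfpos θ)).1) hhint]
    constructor
    · intro hae
      filter_upwards [hae] with θ hθ
      exact ((gibbs_pt (g θ) (f θ) (hg0 θ) (hfpos θ)).2).mp hθ
    · intro hae
      filter_upwards [hae] with θ hθ
      exact ((gibbs_pt (g θ) (f θ) (hg0 θ) (hfpos θ)).2).mpr hθ
  constructor
  · linarith [hnn, hIh, hIM]
  · constructor
    · intro heq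
      apply hz.mp
      linarith [hIh, hIM]
    · intro hae
      have h0 := hz.mpr hae
      linarith [hIh, hIM]
end

section
/- The function A₁^{(1)}(κ) = I₁(κ)/I₀(κ) is differentiable on (0, ∞) with strictly positive derivative, satisfies A₁^{(1)}(0) = 0 and lim_{κ→∞} A₁^{(1)}(κ) = 1; hence A₁^{(1)} : [0, ∞) → [0, 1) is a strictly increasing bijection. -/
open MeasureTheory Real Set

/-- The modified Bessel function of the first kind of integer order `n`. -/
noncomputable def besselI (n : ℕ) (z : ℝ) : ℝ :=
  (2 * π)⁻¹ * ∫ θ in Ioc 0 (2 * π), Real.cos (n * θ) * Real.exp (z * Real.cos θ)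

open Filter

noncomputable def Fb (n : ℕ) (κ : ℝ) : ℝ :=
  ∫ θ in Ioc 0 (2 * π), (Real.cos θ) ^ n * Real.exp (κ * Real.cos θ)

lemma Fb_cont (n : ℕ) (κ : ℝ) :
    Continuous (fun θ : ℝ => (Real.cos θ) ^ n * Real.exp (κ * Real.cos θ)) := by
  fun_prop

lemma Fb_int (n : ℕ) (κ : ℝ) :
    IntegrableOn (fun θ : ℝ => (Real.cos θ) ^ n * Real.exp (κ * Real.cos θ))
      (Ioc 0 (2 * π)) := (Fb_cont n κ).integrableOn_Ioc

lemma two_pi_pos' : (0:ℝ) < 2 * π := by positivity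

lemma vol_Ioc : (volume (Ioc (0:ℝ) (2*π))).toReal = 2 * π := by
  rw [Real.volume_Ioc]
  simp [ENNReal.toReal_ofReal two_pi_pos'.le, Real.pi_pos.le]

lemma besselI_zero_eq (κ : ℝ) : besselI 0 κ = (2 * π)⁻¹ * Fb 0 κ := by
  simp [besselI, Fb]

lemma besselI_one_eq (κ : ℝ) : besselI 1 κ = (2 * π)⁻¹ * Fb 1 κ := by
  simp [besselI, Fb]

lemma ratio_eq (κ : ℝ) : besselI 1 κ / besselI 0 κ = Fb 1 κ / Fb 0 κ := by
  rw [besselI_one_eq, besselI_zero_eq,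
    mul_div_mul_left _ _ (inv_ne_zero (ne_of_gt two_pi_pos'))]

lemma setIntegral_pos_of_subinterval {a b : ℝ} (f : ℝ → ℝ) (hab : a < b)
    (hsub : Ioc a b ⊆ Ioc 0 (2*π)) (hf : Continuous f)
    (hnonneg : ∀ θ, 0 ≤ f θ) {c : ℝ} (hc : 0 < c) (hbd : ∀ θ ∈ Ioc a b, c ≤ f θ) :
    0 < ∫ θ in Ioc 0 (2*π), f θ := by
  have hint : IntegrableOn f (Ioc 0 (2*π)) := hf.integrableOn_Ioc
  have h1 : (∫ θ in Ioc a b, f θ) ≤ ∫ θ in Ioc 0 (2*π), f θ := by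
    refine setIntegral_mono_set hint ?_ (HasSubset.Subset.eventuallyLE hsub)
    exact Filter.Eventually.of_forall hnonneg
  have h2 : c * (volume (Ioc a b)).toReal ≤ ∫ θ in Ioc a b, f θ :=
    setIntegral_ge_of_const_le_real measurableSet_Ioc (by simp) hbd (hint.mono_set hsub)
  have h3 : 0 < c * (volume (Ioc a b)).toReal := by
    rw [Real.volume_Ioc]
    exact mul_pos hc (by rw [ENNReal.toReal_ofReal (by linarith)]; linarith)
  linarith

lemma Fb0_pos (κ : ℝ) : 0 < Fb 0 κ := by
  have := setIntegral_pos_of_subinterval (fun θ => (Real.cos θ)^0 * Real.exp (κ * Real.cos θ))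
    two_pi_pos' (subset_refl _) (Fb_cont 0 κ)
    (fun θ => by positivity) (c := Real.exp (-|κ|)) (Real.exp_pos _) ?_
  · exact this
  · intro θ _
    simp only [pow_zero, one_mul]
    apply Real.exp_le_exp.2
    have h1 : |κ * Real.cos θ| ≤ |κ| := by
      rw [abs_mul]
      calc |κ| * |Real.cos θ| ≤ |κ| * 1 := by
            exact mul_le_mul_of_nonneg_left (Real.abs_cos_le_one θ) (abs_nonneg κ)
        _ = |κ| := mul_one _
    linarith [neg_abs_le (κ * Real.cos θ)]

lemma Fb_hasDerivAt (n : ℕ) (κ : ℝ) : HasDerivAt (Fb n) (Fb (n+1) κ) κ := by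
  have key := hasDerivAt_integral_of_dominated_loc_of_deriv_le (s := Metric.ball κ 1) (Metric.ball_mem_nhds κ one_pos)
    (μ := volume.restrict (Ioc 0 (2*π)))
    (F := fun x θ => (Real.cos θ) ^ n * Real.exp (x * Real.cos θ))
    (F' := fun x θ => (Real.cos θ) ^ (n+1) * Real.exp (x * Real.cos θ))
    (x₀ := κ) (bound := fun _ => Real.exp (|κ| + 1))
    (Filter.Eventually.of_forall fun x => (Fb_cont n x).aestronglyMeasurable)
    (Fb_int n κ) (Fb_cont (n+1) κ).aestronglyMeasurable ?_ ?_ ?_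
  · exact key.2
  · refine Filter.Eventually.of_forall fun θ => fun x hx => ?_
    rw [Real.norm_eq_abs, abs_mul, abs_pow, Real.abs_exp]
    have h1 : |Real.cos θ| ^ (n+1) ≤ 1 := pow_le_one₀ (abs_nonneg _) (Real.abs_cos_le_one θ)
    have h2 : Real.exp (x * Real.cos θ) ≤ Real.exp (|κ| + 1) := by
      apply Real.exp_le_exp.2
      have hx' : |x| ≤ |κ| + 1 := by
        have := mem_ball_iff_norm.1 hx
        rw [Real.norm_eq_abs] at this
        calc |x| ≤ |x - κ| + |κ| := by simpa using abs_add_le (x - κ) κ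
          _ ≤ |κ| + 1 := by linarith
      calc x * Real.cos θ ≤ |x * Real.cos θ| := le_abs_self _
        _ ≤ |x| * 1 := by rw [abs_mul]; exact
            mul_le_mul_of_nonneg_left (Real.abs_cos_le_one θ) (abs_nonneg x)
        _ ≤ |κ| + 1 := by linarith
    calc |Real.cos θ| ^ (n+1) * Real.exp (x * Real.cos θ)
        ≤ 1 * Real.exp (|κ| + 1) := by
          exact mul_le_mul h1 h2 (Real.exp_pos _).le zero_le_one
      _ = Real.exp (|κ| + 1) := one_mul _
  · exact integrableOn_const (hs := measure_Ioc_lt_top.ne)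
  · refine Filter.Eventually.of_forall fun θ => fun x _ => ?_
    have h : HasDerivAt (fun x : ℝ => Real.exp (x * Real.cos θ))
        (Real.cos θ * Real.exp (x * Real.cos θ)) x := by
      simpa [mul_comm, Function.comp_def] using (Real.hasDerivAt_exp (x * Real.cos θ)).comp x
        (hasDerivAt_mul_const (Real.cos θ))
    have := h.const_mul ((Real.cos θ) ^ n)
    convert this using 1
    · rfl
    ring

lemma Fb_expand (κ a : ℝ) :
    (∫ θ in Ioc 0 (2*π), (Real.cos θ - a)^2 * Real.exp (κ * Real.cos θ))
      = Fb 2 κ - 2*a*Fb 1 κ + a^2 * Fb 0 κ := by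
  have hpt : ∀ θ : ℝ, (Real.cos θ - a)^2 * Real.exp (κ * Real.cos θ)
      = (Real.cos θ)^2 * Real.exp (κ * Real.cos θ)
        - 2*a*((Real.cos θ)^1 * Real.exp (κ * Real.cos θ))
        + a^2 * ((Real.cos θ)^0 * Real.exp (κ * Real.cos θ)) := fun θ => by ring
  simp_rw [hpt]
  rw [integral_add, integral_sub, integral_const_mul, integral_const_mul]
  · rfl
  · exact Fb_int 2 κ
  · exact (Fb_int 1 κ).const_mul _
  · exact ((Fb_int 2 κ).sub ((Fb_int 1 κ).const_mul _))
  · exact (Fb_int 0 κ).const_mul _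

lemma variance_pos (κ : ℝ) : Fb 1 κ * Fb 1 κ < Fb 2 κ * Fb 0 κ := by
  set a := Fb 1 κ / Fb 0 κ with ha
  have hF0 := Fb0_pos κ
  have hG : 0 < ∫ θ in Ioc 0 (2*π), (Real.cos θ - a)^2 * Real.exp (κ * Real.cos θ) := by
    have hcont : Continuous (fun θ : ℝ => (Real.cos θ - a)^2 * Real.exp (κ * Real.cos θ)) := by
      fun_prop
    have hnn : ∀ θ, 0 ≤ (Real.cos θ - a)^2 * Real.exp (κ * Real.cos θ) := fun θ => by positivity
    rcases le_or_gt a 0 with hle | hlt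
    · refine setIntegral_pos_of_subinterval (a := 0) (b := π/3) _ (by positivity) ?_ hcont hnn
        (c := (1/2)^2 * Real.exp (-|κ|)) (by positivity) ?_
      · apply Ioc_subset_Ioc le_rfl
        nlinarith [Real.pi_gt_three]
      · intro θ hθ
        have hcos : 1/2 ≤ Real.cos θ := by
          rw [← Real.cos_pi_div_three]
          exact Real.cos_le_cos_of_nonneg_of_le_pi hθ.1.le
            (by linarith [Real.pi_pos]) hθ.2
        have h1 : 1/2 ≤ Real.cos θ - a := by linarith
        have h2 : Real.exp (-|κ|) ≤ Real.exp (κ * Real.cos θ) := by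
          apply Real.exp_le_exp.2
          have : |κ * Real.cos θ| ≤ |κ| := by
            rw [abs_mul]
            nlinarith [Real.abs_cos_le_one θ, abs_nonneg κ]
          linarith [neg_abs_le (κ * Real.cos θ)]
        have h3 : (1/2:ℝ)^2 ≤ (Real.cos θ - a)^2 := by nlinarith
        nlinarith [Real.exp_pos (-|κ|), sq_nonneg (Real.cos θ - a)]
    · refine setIntegral_pos_of_subinterval (a := 2*π/3) (b := π) _ ?_ ?_ hcont hnn
        (c := (1/2)^2 * Real.exp (-|κ|)) (by positivity) ?_
      · linarith [Real.pi_pos]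
      · intro θ hθ
        exact ⟨by linarith [Real.pi_pos, hθ.1], by linarith [hθ.2, Real.pi_pos]⟩
      · intro θ hθ
        have hcos : Real.cos θ ≤ -(1/2) := by
          have : Real.cos θ ≤ Real.cos (2*π/3) :=
            Real.cos_le_cos_of_nonneg_of_le_pi (by positivity) hθ.2 hθ.1.le
          have h23 : Real.cos (2*π/3) = -(1/2) := by
            have : (2*π/3 : ℝ) = π - π/3 := by ring
            rw [this, Real.cos_pi_sub, Real.cos_pi_div_three]
          linarith [this, h23.le]
        have h1 : 1/2 ≤ a - Real.cos θ := by linarith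
        have h2 : Real.exp (-|κ|) ≤ Real.exp (κ * Real.cos θ) := by
          apply Real.exp_le_exp.2
          have : |κ * Real.cos θ| ≤ |κ| := by
            rw [abs_mul]
            nlinarith [Real.abs_cos_le_one θ, abs_nonneg κ]
          linarith [neg_abs_le (κ * Real.cos θ)]
        have h3 : (1/2:ℝ)^2 ≤ (Real.cos θ - a)^2 := by nlinarith
        nlinarith [Real.exp_pos (-|κ|), sq_nonneg (Real.cos θ - a)]
  rw [Fb_expand κ a] at hG
  have hkey : (Fb 2 κ - 2*a*Fb 1 κ + a^2 * Fb 0 κ) * Fb 0 κ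
      = Fb 2 κ * Fb 0 κ - Fb 1 κ * Fb 1 κ := by
    rw [ha]; field_simp; ring
  nlinarith [mul_pos hG hF0]

lemma Fb1_lt_Fb0 (κ : ℝ) : Fb 1 κ < Fb 0 κ := by
  have hsub : (∫ θ in Ioc 0 (2*π),
      (1 - Real.cos θ) * Real.exp (κ * Real.cos θ)) = Fb 0 κ - Fb 1 κ := by
    have hpt : ∀ θ : ℝ, (1 - Real.cos θ) * Real.exp (κ * Real.cos θ)
        = (Real.cos θ)^0 * Real.exp (κ * Real.cos θ)
          - (Real.cos θ)^1 * Real.exp (κ * Real.cos θ) := fun θ => by ring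
    simp_rw [hpt]
    rw [integral_sub (Fb_int 0 κ) (Fb_int 1 κ)]
    rfl
  have hpos : 0 < ∫ θ in Ioc 0 (2*π), (1 - Real.cos θ) * Real.exp (κ * Real.cos θ) := by
    refine setIntegral_pos_of_subinterval (a := π/2) (b := π) _ ?_ ?_ (by fun_prop)
      (fun θ => by nlinarith [Real.cos_le_one θ, Real.exp_pos (κ * Real.cos θ)])
      (c := 1 * Real.exp (-|κ|)) (by positivity) ?_
    · linarith [Real.pi_pos]
    · intro θ hθ
      exact ⟨by linarith [Real.pi_pos, hθ.1], by linarith [hθ.2, Real.pi_pos]⟩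
    · intro θ hθ
      have hcos : Real.cos θ ≤ 0 := by
        rw [← Real.cos_pi_div_two]
        exact Real.cos_le_cos_of_nonneg_of_le_pi (by positivity) hθ.2 hθ.1.le
      have h2 : Real.exp (-|κ|) ≤ Real.exp (κ * Real.cos θ) := by
        apply Real.exp_le_exp.2
        have : |κ * Real.cos θ| ≤ |κ| := by
          rw [abs_mul]
          nlinarith [Real.abs_cos_le_one θ, abs_nonneg κ]
        linarith [neg_abs_le (κ * Real.cos θ)]
      nlinarith [Real.exp_pos (-|κ|)]
  linarith [hsub ▸ hpos]

lemma Fb1_zero : Fb 1 0 = 0 := by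
  have : Fb 1 0 = ∫ θ in Ioc 0 (2*π), Real.cos θ := by
    unfold Fb
    congr 1
    ext θ
    simp
  rw [this, ← intervalIntegral.integral_of_le two_pi_pos'.le, integral_cos]
  simp [Real.sin_two_pi]

lemma exp_bound_aux (κ θ : ℝ) : Real.exp (-|κ|) ≤ Real.exp (κ * Real.cos θ) := by
  apply Real.exp_le_exp.2
  have : |κ * Real.cos θ| ≤ |κ| := by
    rw [abs_mul]
    nlinarith [Real.abs_cos_le_one θ, abs_nonneg κ]
  linarith [neg_abs_le (κ * Real.cos θ)]

lemma tendsto_ratio : Filter.Tendsto (fun κ => Fb 1 κ / Fb 0 κ) atTop (nhds 1) := by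
  rw [Metric.tendsto_atTop]
  intro ε hε
  set e := ε / 2 with he_def
  have he : 0 < e := by positivity
  set r := min (Real.sqrt e) 1 with hr_def
  have hr0 : 0 < r := lt_min (Real.sqrt_pos.2 he) one_pos
  have hr1 : r ≤ 1 := min_le_right _ _
  have hrπ : r ≤ π := hr1.trans (by linarith [Real.pi_gt_three])
  have hrsq : r ^ 2 ≤ e := by
    calc r ^ 2 ≤ (Real.sqrt e) ^ 2 := by
          apply sq_le_sq' _ (min_le_left _ _)
          have := Real.sqrt_nonneg e; linarith
      _ = e := Real.sq_sqrt he.le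
  have hcosr : 1 - e / 2 ≤ Real.cos r := by
    have := Real.one_sub_sq_div_two_le_cos (x := r)
    linarith
  -- eventual smallness of the exponential term
  have hexp0 : Filter.Tendsto (fun κ : ℝ => (4 * π / r) * Real.exp (-(e / 2 * κ)))
      atTop (nhds 0) := by
    have h1 : Filter.Tendsto (fun κ : ℝ => e / 2 * κ) atTop atTop :=
      Filter.Tendsto.const_mul_atTop (by positivity) tendsto_id
    have h2 : Filter.Tendsto (fun κ : ℝ => Real.exp (-(e / 2 * κ))) atTop (nhds 0) :=
      Real.tendsto_exp_neg_atTop_nhds_zero.comp h1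
    simpa using h2.const_mul (4 * π / r)
  have hev : ∀ᶠ κ : ℝ in atTop,
      (4 * π / r) * Real.exp (-(e / 2 * κ)) < e := by
    have := hexp0.eventually (eventually_lt_nhds he)
    exact this
  rcases (hev.and (eventually_ge_atTop (0:ℝ))).exists_forall_of_atTop with ⟨N, hN⟩
  refine ⟨N, fun κ hκ => ?_⟩
  obtain ⟨hsmall, hκ0⟩ := hN κ hκ
  have hF0 := Fb0_pos κ
  have hF1 := Fb1_lt_Fb0 κ
  -- claim 1 : Fb 0 κ - Fb 1 κ ≤ e * Fb 0 κ + 4 * π * exp (κ * (1 - e))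
  have claim1 : Fb 0 κ - Fb 1 κ ≤ e * Fb 0 κ + 4 * π * Real.exp (κ * (1 - e)) := by
    have hptw : ∀ θ ∈ Ioc (0:ℝ) (2*π),
        (1 - Real.cos θ) * Real.exp (κ * Real.cos θ)
          ≤ e * ((Real.cos θ)^0 * Real.exp (κ * Real.cos θ)) + 2 * Real.exp (κ * (1 - e)) := by
      intro θ _
      rcases le_or_gt (1 - Real.cos θ) e with h | h
      · have := Real.exp_pos (κ * (1 - e))
        have hw := Real.exp_pos (κ * Real.cos θ)
        simp only [pow_zero, one_mul]
        nlinarith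
      · have hc : Real.cos θ ≤ 1 - e := by linarith
        have hw : Real.exp (κ * Real.cos θ) ≤ Real.exp (κ * (1 - e)) :=
          Real.exp_le_exp.2 (mul_le_mul_of_nonneg_left hc hκ0)
        have h1 : 1 - Real.cos θ ≤ 2 := by nlinarith [Real.neg_one_le_cos θ]
        have hw0 := Real.exp_pos (κ * Real.cos θ)
        simp only [pow_zero, one_mul]
        nlinarith [Real.exp_pos (κ * (1 - e)), Real.cos_le_one θ]
    have hmono : (∫ θ in Ioc 0 (2*π), (1 - Real.cos θ) * Real.exp (κ * Real.cos θ))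
        ≤ ∫ θ in Ioc 0 (2*π),
            (e * ((Real.cos θ)^0 * Real.exp (κ * Real.cos θ)) + 2 * Real.exp (κ * (1 - e))) := by
      refine setIntegral_mono_on ?_ ?_ measurableSet_Ioc hptw
      · exact (Continuous.integrableOn_Ioc (by fun_prop))
      · exact ((Fb_int 0 κ).const_mul e).add (integrableOn_const (hs := measure_Ioc_lt_top.ne))
    have hleft : (∫ θ in Ioc 0 (2*π), (1 - Real.cos θ) * Real.exp (κ * Real.cos θ))
        = Fb 0 κ - Fb 1 κ := by
      have hpt : ∀ θ : ℝ, (1 - Real.cos θ) * Real.exp (κ * Real.cos θ)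
          = (Real.cos θ)^0 * Real.exp (κ * Real.cos θ)
            - (Real.cos θ)^1 * Real.exp (κ * Real.cos θ) := fun θ => by ring
      simp_rw [hpt]
      rw [integral_sub (Fb_int 0 κ) (Fb_int 1 κ)]
      rfl
    have hright : (∫ θ in Ioc 0 (2*π),
          (e * ((Real.cos θ)^0 * Real.exp (κ * Real.cos θ)) + 2 * Real.exp (κ * (1 - e))))
        = e * Fb 0 κ + 2 * Real.exp (κ * (1 - e)) * (2 * π) := by
      rw [integral_add (((Fb_int 0 κ)).const_mul e)
        (integrableOn_const (hs := measure_Ioc_lt_top.ne)), integral_const_mul,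
        setIntegral_const, measureReal_def, vol_Ioc]
      simp [Fb, smul_eq_mul, mul_comm]
    rw [hleft, hright] at hmono
    nlinarith [hmono]
  -- claim 2 : r * exp (κ * cos r) ≤ Fb 0 κ
  have claim2 : r * Real.exp (κ * Real.cos r) ≤ Fb 0 κ := by
    have hsub : Ioc (2*π - r) (2*π) ⊆ Ioc 0 (2*π) := by
      apply Ioc_subset_Ioc _ le_rfl
      nlinarith [Real.pi_gt_three]
    have h1 : (∫ θ in Ioc (2*π - r) (2*π), (Real.cos θ)^0 * Real.exp (κ * Real.cos θ))
        ≤ Fb 0 κ := by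
      refine setIntegral_mono_set (Fb_int 0 κ) ?_ (HasSubset.Subset.eventuallyLE hsub)
      exact Filter.Eventually.of_forall fun θ => by positivity
    have h2 : Real.exp (κ * Real.cos r) * (volume (Ioc (2*π - r) (2*π))).toReal
        ≤ ∫ θ in Ioc (2*π - r) (2*π), (Real.cos θ)^0 * Real.exp (κ * Real.cos θ) := by
      refine setIntegral_ge_of_const_le_real measurableSet_Ioc (by simp) ?_
        ((Fb_int 0 κ).mono_set hsub)
      intro θ hθ
      simp only [pow_zero, one_mul]
      apply Real.exp_le_exp.2
      apply mul_le_mul_of_nonneg_left _ hκ0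
      have hθcos : Real.cos θ = Real.cos (2*π - θ) := (Real.cos_two_pi_sub θ).symm
      rw [hθcos]
      exact Real.cos_le_cos_of_nonneg_of_le_pi (by linarith [hθ.2]) hrπ (by linarith [hθ.1])
    have hvol : (volume (Ioc (2*π - r) (2*π))).toReal = r := by
      rw [Real.volume_Ioc]
      rw [ENNReal.toReal_ofReal (by linarith)]
      ring
    rw [hvol] at h2
    calc r * Real.exp (κ * Real.cos r) = Real.exp (κ * Real.cos r) * r := mul_comm _ _
      _ ≤ _ := h2.trans h1
  -- assemble
  have hratio : 1 - Fb 1 κ / Fb 0 κ ≤ e + (4 * π / r) * Real.exp (-(e / 2 * κ)) := by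
    have hstep : (Fb 0 κ - Fb 1 κ) / Fb 0 κ ≤ e + 4 * π * Real.exp (κ * (1 - e)) / Fb 0 κ := by
      rw [div_le_iff₀ hF0]
      have h4 : 0 < 4 * π * Real.exp (κ * (1 - e)) := by positivity
      have := div_mul_cancel₀ (4 * π * Real.exp (κ * (1 - e))) (ne_of_gt hF0)
      nlinarith [claim1]
    have hstep2 : 4 * π * Real.exp (κ * (1 - e)) / Fb 0 κ
        ≤ (4 * π / r) * Real.exp (-(e / 2 * κ)) := by
      have hlb : 0 < r * Real.exp (κ * Real.cos r) := by positivity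
      have h1 : 4 * π * Real.exp (κ * (1 - e)) / Fb 0 κ
          ≤ 4 * π * Real.exp (κ * (1 - e)) / (r * Real.exp (κ * Real.cos r)) := by
        apply div_le_div_of_nonneg_left (by positivity) hlb claim2
      have h2 : 4 * π * Real.exp (κ * (1 - e)) / (r * Real.exp (κ * Real.cos r))
          = (4 * π / r) * Real.exp (κ * (1 - e) - κ * Real.cos r) := by
        rw [Real.exp_sub]; field_simp; try ring
      have h3 : Real.exp (κ * (1 - e) - κ * Real.cos r) ≤ Real.exp (-(e / 2 * κ)) := by
        apply Real.exp_le_exp.2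
        nlinarith [hcosr, hκ0]
      calc 4 * π * Real.exp (κ * (1 - e)) / Fb 0 κ
          ≤ (4 * π / r) * Real.exp (κ * (1 - e) - κ * Real.cos r) := h2 ▸ h1
        _ ≤ (4 * π / r) * Real.exp (-(e / 2 * κ)) := by
            apply mul_le_mul_of_nonneg_left h3 (by positivity)
    have heq : 1 - Fb 1 κ / Fb 0 κ = (Fb 0 κ - Fb 1 κ) / Fb 0 κ := by
      field_simp
    rw [heq]
    linarith [hstep, hstep2]
  have hlt1 : Fb 1 κ / Fb 0 κ < 1 := (div_lt_one hF0).2 hF1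
  rw [Real.dist_eq, abs_of_nonpos (by linarith)]
  have : -(Fb 1 κ / Fb 0 κ - 1) = 1 - Fb 1 κ / Fb 0 κ := by ring
  rw [this]
  calc 1 - Fb 1 κ / Fb 0 κ ≤ e + (4 * π / r) * Real.exp (-(e / 2 * κ)) := hratio
    _ < e + e := by linarith
    _ = ε := by rw [he_def]; ring

lemma hasDerivAt_ratio (κ : ℝ) : HasDerivAt (fun κ => Fb 1 κ / Fb 0 κ)
    ((Fb 2 κ * Fb 0 κ - Fb 1 κ * Fb 1 κ) / (Fb 0 κ)^2) κ := by
  have := (Fb_hasDerivAt 1 κ).div (Fb_hasDerivAt 0 κ) (ne_of_gt (Fb0_pos κ))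
  norm_num at this
  exact this

/-- The Bessel function ratio `A₁ = I₁/I₀` is differentiable on `(0,∞)` with
strictly positive derivative, vanishes at `0`, tends to `1` at infinity, and is a
strictly increasing bijection from `[0,∞)` onto `[0,1)`. -/
theorem besselRatio_strictMono_bijection :
    DifferentiableOn ℝ (fun κ => besselI 1 κ / besselI 0 κ) (Ioi 0) ∧
    (∀ κ ∈ Ioi (0 : ℝ), 0 < deriv (fun κ => besselI 1 κ / besselI 0 κ) κ) ∧
    besselI 1 0 / besselI 0 0 = 0 ∧
    Filter.Tendsto (fun κ => besselI 1 κ / besselI 0 κ) Filter.atTop (nhds 1) ∧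
    StrictMonoOn (fun κ => besselI 1 κ / besselI 0 κ) (Ici 0) ∧
    Set.BijOn (fun κ => besselI 1 κ / besselI 0 κ) (Ici 0) (Ico 0 1) := by
  have hfun : (fun κ => besselI 1 κ / besselI 0 κ) = fun κ => Fb 1 κ / Fb 0 κ :=
    funext ratio_eq
  set A : ℝ → ℝ := fun κ => Fb 1 κ / Fb 0 κ with hA_def
  have hdiff : Differentiable ℝ A := fun κ => (hasDerivAt_ratio κ).differentiableAt
  have hpos : ∀ κ : ℝ, 0 < deriv A κ := by
    intro κ
    rw [(hasDerivAt_ratio κ).deriv]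
    exact div_pos (sub_pos.2 (variance_pos κ)) (pow_pos (Fb0_pos κ) 2)
  have hmono : StrictMono A := strictMono_of_deriv_pos hpos
  have hA0 : A 0 = 0 := by simp [hA_def, Fb1_zero]
  have hlt1 : ∀ κ, A κ < 1 := fun κ => (div_lt_one (Fb0_pos κ)).2 (Fb1_lt_Fb0 κ)
  rw [hfun]
  refine ⟨hdiff.differentiableOn, fun κ _ => hpos κ, ?_, tendsto_ratio,
    hmono.strictMonoOn _, ?_, hmono.injective.injOn, ?_⟩
  · rw [ratio_eq]
    simp [Fb1_zero]
  · intro κ hκ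
    exact ⟨hA0 ▸ hmono.monotone hκ, hlt1 κ⟩
  · intro y hy
    obtain ⟨b, hb, hb0⟩ :=
      ((tendsto_ratio.eventually (eventually_gt_nhds hy.2)).and
        (eventually_ge_atTop (0:ℝ))).exists
    have hsub : Icc (A 0) (A b) ⊆ A '' Icc 0 b :=
      intermediate_value_Icc hb0 hdiff.continuous.continuousOn
    have hy' : y ∈ Icc (A 0) (A b) := ⟨by rw [hA0]; exact hy.1, hb.le⟩
    obtain ⟨x, hx, hxy⟩ := hsub hy'
    exact ⟨x, hx.1, hxy⟩
end
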